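/- Let d ≥ 1 and let C : ℝ^d → ℝ satisfy |C(x)| ≤ C(0) for all x, C(0) > 0, and the Hölder condition C(0) − C(x) ≤ b|x|_∞^β for all |x|_∞ ≤ θ, where b > 0, β ∈ (0,1], and 0 < θ ≤ min{1, (2C(0)/b)^{1/β}}. Then there exists a length ℓ_H ∈ (1,∞), depending only on θ and β, such that for all ℓ ≥ ℓ_H one has √(C(0)) + (2 + 2^{3/2}) 𝒥(ℓ) ≤ 10 √(C(0) ln ℓ). -/

import Mathlib

open MeasureTheory

set_option maxHeartbeats 2000000 in
/-- There is a length `ℓ_H ∈ (1,∞)` (depending only on `θ` and `β`) such that for all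
`ℓ ≥ ℓ_H` one has `√C(0) + (2 + 2^{3/2}) 𝒥(ℓ) ≤ 10 √(C(0) ln ℓ)`, where `𝒥` is the
entropy integral of the covariance function `C`. -/
theorem entropy_integral_log_bound
    (d : ℕ) (hd : 1 ≤ d)
    (C : (Fin d → ℝ) → ℝ)
    (hC0pos : 0 < C 0) (hCbd : ∀ x, |C x| ≤ C 0)
    (b β θ : ℝ) (hb : 0 < b) (hβ : 0 < β) (hβ1 : β ≤ 1)
    (hθpos : 0 < θ) (hθle : θ ≤ min 1 ((2 * C 0 / b) ^ (1 / β)))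
    (hHolder : ∀ x : Fin d → ℝ, ‖x‖ ≤ θ → C 0 - C x ≤ b * ‖x‖ ^ β) :
    ∃ ℓH : ℝ, 1 < ℓH ∧ ∀ ℓ : ℝ, ℓH ≤ ℓ →
      IntegrableOn
        (fun p : ℝ => sSup ((fun x => Real.sqrt (C 0 - C x)) ''
          {x : Fin d → ℝ | ‖x‖ ≤ ℓ * 2 ^ (-(p ^ 2))}))
        (Set.Ioi (1 : ℝ)) ∧
      Real.sqrt (C 0) +
          (2 + 2 ^ ((3 : ℝ) / 2)) *
            ∫ p in Set.Ioi (1 : ℝ),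
              sSup ((fun x => Real.sqrt (C 0 - C x)) ''
                {x : Fin d → ℝ | ‖x‖ ≤ ℓ * 2 ^ (-(p ^ 2))})
        ≤ 10 * Real.sqrt (C 0 * Real.log ℓ) := by
  have hlog2 : 0 < Real.log 2 := Real.log_pos one_lt_two
  have hθ1 : θ ≤ 1 := le_trans hθle (min_le_left _ _)
  set T : ℝ := -Real.log θ with hTdef
  have hT : 0 ≤ T := by
    have := Real.log_nonpos hθpos.le hθ1
    simp only [hTdef]; linarith
  set D : ℝ := 1 + (4 + 2 * Real.sqrt 2) / (β * Real.log 2) with hDdef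
  set Q : ℝ := max 1 ((D + 8.3 * Real.sqrt T) / 1.7) with hQdef
  have hQ1 : (1:ℝ) ≤ Q := le_max_left _ _
  refine ⟨Real.exp (Q ^ 2), ?_, ?_⟩
  · have h1 : (1:ℝ) ≤ Q ^ 2 := by nlinarith
    calc (1:ℝ) < Real.exp 1 := by
          nlinarith [Real.add_one_le_exp (1:ℝ)]
      _ ≤ Real.exp (Q ^ 2) := Real.exp_le_exp.2 h1
  intro ℓ hℓ
  have hℓ1 : 1 < ℓ := by
    have h1 : (1:ℝ) ≤ Q ^ 2 := by nlinarith
    calc (1:ℝ) < Real.exp 1 := by nlinarith [Real.add_one_le_exp (1:ℝ)]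
      _ ≤ Real.exp (Q ^ 2) := Real.exp_le_exp.2 h1
      _ ≤ ℓ := hℓ
  have hℓ0 : 0 < ℓ := lt_trans one_pos hℓ1
  set L : ℝ := Real.log ℓ with hLdef
  have hLQ : Q ^ 2 ≤ L := by
    rw [hLdef, ← Real.log_exp (Q ^ 2)]
    exact Real.log_le_log (Real.exp_pos _) hℓ
  have hL1 : 1 ≤ L := le_trans (by nlinarith) hLQ
  set p₀ : ℝ := Real.sqrt ((L + T) / Real.log 2) with hp₀def
  have hp₀sq : p₀ ^ 2 = (L + T) / Real.log 2 :=
    Real.sq_sqrt (by positivity)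
  have hp₀1 : 1 < p₀ := by
    have h1 : (1:ℝ) < (L + T) / Real.log 2 := by
      rw [lt_div_iff₀ hlog2]; nlinarith [Real.log_two_lt_d9]
    nlinarith [Real.sqrt_nonneg ((L + T) / Real.log 2)]
  have hp₀0 : 0 < p₀ := lt_trans one_pos hp₀1
  -- the function
  set f : ℝ → ℝ := fun p : ℝ => sSup ((fun x => Real.sqrt (C 0 - C x)) ''
    {x : Fin d → ℝ | ‖x‖ ≤ ℓ * 2 ^ (-(p ^ 2))}) with hfdef
  set A : ℝ := Real.sqrt (2 * C 0) with hAdef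
  have hA0 : 0 ≤ A := Real.sqrt_nonneg _
  have hrpos : ∀ p : ℝ, 0 < ℓ * 2 ^ (-(p ^ 2)) := fun p => by positivity
  have hmem0 : ∀ p : ℝ, (0 : Fin d → ℝ) ∈ {x : Fin d → ℝ | ‖x‖ ≤ ℓ * 2 ^ (-(p ^ 2))} := by
    intro p; simp only [Set.mem_setOf_eq, norm_zero]; exact (hrpos p).le
  have hne : ∀ p : ℝ, ((fun x => Real.sqrt (C 0 - C x)) ''
      {x : Fin d → ℝ | ‖x‖ ≤ ℓ * 2 ^ (-(p ^ 2))}).Nonempty :=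
    fun p => ⟨_, Set.mem_image_of_mem _ (hmem0 p)⟩
  have hub : ∀ p : ℝ, ∀ y ∈ (fun x => Real.sqrt (C 0 - C x)) ''
      {x : Fin d → ℝ | ‖x‖ ≤ ℓ * 2 ^ (-(p ^ 2))}, y ≤ A := by
    rintro p y ⟨x, _, rfl⟩
    apply Real.sqrt_le_sqrt
    have := hCbd x
    rw [abs_le] at this
    linarith
  have hbdd : ∀ p : ℝ, BddAbove ((fun x => Real.sqrt (C 0 - C x)) ''
      {x : Fin d → ℝ | ‖x‖ ≤ ℓ * 2 ^ (-(p ^ 2))}) := fun p => ⟨A, hub p⟩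
  have hf_le : ∀ p : ℝ, f p ≤ A := fun p => csSup_le (hne p) (hub p)
  have hf_nonneg : ∀ p : ℝ, 0 ≤ f p := by
    intro p
    have h0 : Real.sqrt (C 0 - C 0) ∈ (fun x => Real.sqrt (C 0 - C x)) ''
        {x : Fin d → ℝ | ‖x‖ ≤ ℓ * 2 ^ (-(p ^ 2))} :=
      Set.mem_image_of_mem _ (hmem0 p)
    have := le_csSup (hbdd p) h0
    simpa using this
  -- antitonicity
  have hf_anti : ∀ a c : ℝ, 0 ≤ a → a ≤ c → f c ≤ f a := by
    intro a c ha hac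
    apply csSup_le_csSup (hbdd a) (hne c)
    apply Set.image_mono
    intro x hx
    simp only [Set.mem_setOf_eq] at hx ⊢
    refine le_trans hx (mul_le_mul_of_nonneg_left ?_ hℓ0.le)
    exact Real.rpow_le_rpow_of_exponent_le one_le_two (by nlinarith)
  have hmeas : AEStronglyMeasurable f (volume.restrict (Set.Ioi (1:ℝ))) := by
    have hanti : Antitone (fun p => f (max p 1)) := by
      intro p q hpq
      exact hf_anti (max p 1) (max q 1) (le_trans zero_le_one (le_max_right p 1))
        (max_le_max hpq le_rfl)
    refine (hanti.measurable.aestronglyMeasurable).congr ?_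
    refine (ae_restrict_iff' measurableSet_Ioi).2 (Filter.Eventually.of_forall ?_)
    intro p hp
    simp only [max_eq_left (le_of_lt (Set.mem_Ioi.mp hp))]
  -- Hölder constant bound
  have hbθ : b * θ ^ β ≤ 2 * C 0 := by
    have h2 : θ ≤ (2 * C 0 / b) ^ (1 / β) := le_trans hθle (min_le_right _ _)
    have h3 : θ ^ β ≤ ((2 * C 0 / b) ^ (1 / β)) ^ β :=
      Real.rpow_le_rpow hθpos.le h2 hβ.le
    rw [← Real.rpow_mul (by positivity), one_div_mul_cancel hβ.ne', Real.rpow_one] at h3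
    have := mul_le_mul_of_nonneg_left h3 hb.le
    calc b * θ ^ β ≤ b * (2 * C 0 / b) := this
      _ = 2 * C 0 := by field_simp
  -- radius formula
  have hθexp : Real.exp T = 1 / θ := by
    rw [hTdef, Real.exp_neg, Real.exp_log hθpos, one_div]
  have hr_eq : ∀ p : ℝ, ℓ * 2 ^ (-(p ^ 2)) =
      θ * Real.exp (-(Real.log 2) * (p ^ 2 - p₀ ^ 2)) := by
    intro p
    rw [Real.rpow_def_of_pos two_pos, hp₀sq]
    have h1 : -(Real.log 2) * (p ^ 2 - (L + T) / Real.log 2) =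
        Real.log 2 * (-(p ^ 2)) + (L + T) := by
      field_simp; ring
    rw [h1, Real.exp_add, Real.exp_add, Real.exp_log hℓ0, hθexp]
    field_simp
  -- master bound for p ≥ p₀
  set c : ℝ := β * Real.log 2 / 2 with hcdef
  have hc : 0 < c := by positivity
  have hmaster : ∀ p : ℝ, p₀ ≤ p → f p ≤ A * Real.exp (c * (p₀ ^ 2 - p ^ 2)) := by
    intro p hp
    have hrθ : ℓ * 2 ^ (-(p ^ 2)) ≤ θ := by
      rw [hr_eq p]
      calc θ * Real.exp (-(Real.log 2) * (p ^ 2 - p₀ ^ 2)) ≤ θ * 1 := by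
            apply mul_le_mul_of_nonneg_left _ hθpos.le
            rw [Real.exp_le_one_iff]
            have hpp : 0 ≤ (p - p₀) * (p + p₀) := mul_nonneg (by linarith) (by linarith)
            nlinarith [mul_nonneg hlog2.le hpp]
        _ = θ := mul_one θ
    apply csSup_le (hne p)
    rintro y ⟨x, hx, rfl⟩
    simp only [Set.mem_setOf_eq] at hx
    have hxθ : ‖x‖ ≤ θ := le_trans hx hrθ
    have h1 : C 0 - C x ≤ b * (ℓ * 2 ^ (-(p ^ 2))) ^ β := by
      refine le_trans (hHolder x hxθ) ?_
      have := Real.rpow_le_rpow (norm_nonneg x) hx hβ.le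
      nlinarith
    have h2 : b * (ℓ * 2 ^ (-(p ^ 2))) ^ β ≤
        2 * C 0 * Real.exp (-(β * Real.log 2) * (p ^ 2 - p₀ ^ 2)) := by
      rw [hr_eq p, Real.mul_rpow hθpos.le (Real.exp_nonneg _), ← Real.exp_mul]
      have h3 : b * (θ ^ β * Real.exp (-(Real.log 2) * (p ^ 2 - p₀ ^ 2) * β)) =
          (b * θ ^ β) * Real.exp (-(Real.log 2) * (p ^ 2 - p₀ ^ 2) * β) := by ring
      rw [h3]
      have h4 : -(Real.log 2) * (p ^ 2 - p₀ ^ 2) * β = -(β * Real.log 2) * (p ^ 2 - p₀ ^ 2) := by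
        ring
      rw [h4]
      exact mul_le_mul_of_nonneg_right hbθ (Real.exp_nonneg _)
    have h5 : Real.sqrt (C 0 - C x) ≤
        Real.sqrt (2 * C 0 * Real.exp (-(β * Real.log 2) * (p ^ 2 - p₀ ^ 2))) :=
      Real.sqrt_le_sqrt (le_trans h1 h2)
    refine le_trans h5 ?_
    rw [Real.sqrt_mul (by positivity), ← Real.exp_half]
    apply mul_le_mul_of_nonneg_left _ hA0
    apply Real.exp_le_exp.2
    have hpp : 0 ≤ (p - p₀) * (p + p₀) := mul_nonneg (by linarith) (by linarith)
    have : 0 ≤ β * Real.log 2 := by positivity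
    rw [hcdef]
    nlinarith [mul_nonneg this hpp]
  -- dominating function
  set K : ℝ := A * Real.exp (c * p₀ ^ 2) with hKdef
  set g : ℝ → ℝ := fun p => K * Real.exp (-c * p ^ 2) with hgdef
  have hKg : ∀ p : ℝ, g p = A * Real.exp (c * (p₀ ^ 2 - p ^ 2)) := by
    intro p
    simp only [hgdef, hKdef]
    rw [mul_assoc, ← Real.exp_add]
    ring_nf
  have hfg : ∀ p : ℝ, 1 < p → f p ≤ g p := by
    intro p hp
    rcases le_or_gt p₀ p with h | h
    · rw [hKg p]; exact hmaster p h
    · rw [hKg p]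
      refine le_trans (hf_le p) ?_
      nth_rewrite 1 [← mul_one A]
      apply mul_le_mul_of_nonneg_left _ hA0
      rw [Real.one_le_exp_iff]
      have hpp : 0 ≤ (p₀ - p) * (p₀ + p) := mul_nonneg (by linarith) (by linarith)
      nlinarith [mul_nonneg hc.le hpp]
  have hg_int : Integrable g := (integrable_exp_neg_mul_sq hc).const_mul K
  have h_int : IntegrableOn f (Set.Ioi (1:ℝ)) := by
    apply Integrable.mono' hg_int.integrableOn hmeas
    filter_upwards [ae_restrict_mem measurableSet_Ioi] with p hp
    rw [Real.norm_eq_abs, abs_of_nonneg (hf_nonneg p)]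
    exact hfg p hp
  refine ⟨h_int, ?_⟩
  -- split the integral
  have h_int1 : IntegrableOn f (Set.Ioc 1 p₀) :=
    h_int.mono_set Set.Ioc_subset_Ioi_self
  have h_int2 : IntegrableOn f (Set.Ioi p₀) :=
    h_int.mono_set (Set.Ioi_subset_Ioi hp₀1.le)
  have hsplit : ∫ p in Set.Ioi (1:ℝ), f p =
      (∫ p in Set.Ioc 1 p₀, f p) + ∫ p in Set.Ioi p₀, f p := by
    rw [← MeasureTheory.setIntegral_union (Set.Ioc_disjoint_Ioi le_rfl) measurableSet_Ioi
      h_int1 h_int2, Set.Ioc_union_Ioi_eq_Ioi hp₀1.le]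
  -- bound on Ioc 1 p₀
  have hbound1 : (∫ p in Set.Ioc 1 p₀, f p) ≤ A * (p₀ - 1) := by
    have h1 : (∫ p in Set.Ioc 1 p₀, f p) ≤ ∫ _ in Set.Ioc 1 p₀, A := by
      apply setIntegral_mono_on h_int1 _ measurableSet_Ioc (fun p _ => hf_le p)
      exact integrableOn_const measure_Ioc_lt_top.ne
    rw [setIntegral_const, Real.volume_real_Ioc_of_le hp₀1.le, smul_eq_mul] at h1
    linarith
  -- bound on Ioi p₀
  set r : ℝ := β * Real.log 2 * p₀ with hrdef
  have hr : 0 < r := by positivity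
  have hbound2 : (∫ p in Set.Ioi p₀, f p) ≤ A / r := by
    have hgr : ∀ p : ℝ, p ∈ Set.Ioi p₀ →
        f p ≤ A * Real.exp (r * p₀) * Real.exp (-(r * p)) := by
      intro p hp
      rw [Set.mem_Ioi] at hp
      refine le_trans (hmaster p hp.le) ?_
      rw [mul_assoc, ← Real.exp_add]
      apply mul_le_mul_of_nonneg_left _ hA0
      apply Real.exp_le_exp.2
      have hpp : 0 ≤ (p - p₀) ^ 2 := sq_nonneg _
      have h2 : 0 ≤ β * Real.log 2 := by positivity
      rw [hcdef, hrdef]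
      nlinarith [mul_nonneg h2 hpp]
    have hint_exp : IntegrableOn (fun p => A * Real.exp (r * p₀) * Real.exp (-(r * p)))
        (Set.Ioi p₀) := by
      apply Integrable.const_mul
      simpa [neg_mul, IntegrableOn] using exp_neg_integrableOn_Ioi p₀ hr
    have h1 : (∫ p in Set.Ioi p₀, f p) ≤
        ∫ p in Set.Ioi p₀, A * Real.exp (r * p₀) * Real.exp (-(r * p)) :=
      setIntegral_mono_on h_int2 hint_exp measurableSet_Ioi hgr
    have h2 : (∫ p in Set.Ioi p₀, A * Real.exp (r * p₀) * Real.exp (-(r * p))) =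
        A * Real.exp (r * p₀) * (Real.exp (-(r * p₀)) / r) := by
      rw [MeasureTheory.integral_const_mul]
      congr 1
      rw [MeasureTheory.integral_comp_mul_left_Ioi (fun u => Real.exp (-u)) p₀ hr,
        integral_exp_neg_Ioi, smul_eq_mul, div_eq_inv_mul]
    rw [h2] at h1
    refine le_trans h1 (le_of_eq ?_)
    rw [Real.exp_neg]
    field_simp
  -- total integral bound
  have hIbound : (∫ p in Set.Ioi (1:ℝ), f p) ≤ A * (p₀ + 1 / (β * Real.log 2)) := by
    rw [hsplit]
    have h3 : A / r ≤ A * (1 / (β * Real.log 2)) := by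
      rw [hrdef, div_le_iff₀ (by positivity)]
      have : A * (1 / (β * Real.log 2)) * (β * Real.log 2 * p₀) = A * p₀ := by
        field_simp
      rw [this]
      nth_rewrite 1 [← mul_one A]
      exact mul_le_mul_of_nonneg_left hp₀1.le hA0
    nlinarith [hbound1, hbound2, h3, hA0]
  -- numeric facts
  have hs2 : Real.sqrt 2 ≤ 1.415 := by
    nlinarith [Real.sq_sqrt (show (0:ℝ) ≤ 2 by norm_num), Real.sqrt_nonneg 2]
  have hs2' : 0 ≤ Real.sqrt 2 := Real.sqrt_nonneg 2
  have hslog : (0.83:ℝ) ≤ Real.sqrt (Real.log 2) := by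
    nlinarith [Real.sq_sqrt (Real.log_nonneg one_le_two), Real.sqrt_nonneg (Real.log 2),
      Real.log_two_gt_d9]
  have h32 : (2:ℝ) ^ ((3:ℝ)/2) = 2 * Real.sqrt 2 := by
    rw [show ((3:ℝ)/2) = 1 + 1/2 by norm_num, Real.rpow_add two_pos, Real.rpow_one,
      ← Real.sqrt_eq_rpow]
  have hsL : 0 ≤ Real.sqrt L := Real.sqrt_nonneg L
  have hsT : 0 ≤ Real.sqrt T := Real.sqrt_nonneg T
  -- p₀ ≤ (√L + √T)/√(log 2)
  have hp₀le : p₀ ≤ (Real.sqrt L + Real.sqrt T) / Real.sqrt (Real.log 2) := by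
    rw [hp₀def, Real.sqrt_div (by linarith) , div_le_div_iff_of_pos_right]
    · have h := Real.sqrt_le_sqrt (show L + T ≤ (Real.sqrt L + Real.sqrt T)^2 by
        nlinarith [Real.sq_sqrt (show (0:ℝ) ≤ L by linarith), Real.sq_sqrt hT])
      rwa [Real.sqrt_sq (by positivity)] at h
    · exact lt_of_lt_of_le (by norm_num) hslog
  -- (4+2√2) * p₀ ≤ 8.3 * (√L + √T)
  have hcoef : (4 + 2 * Real.sqrt 2) * p₀ ≤ 8.3 * (Real.sqrt L + Real.sqrt T) := by
    have h1 : (4 + 2 * Real.sqrt 2) * p₀ ≤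
        (4 + 2 * Real.sqrt 2) * ((Real.sqrt L + Real.sqrt T) / Real.sqrt (Real.log 2)) :=
      mul_le_mul_of_nonneg_left hp₀le (by nlinarith)
    refine le_trans h1 ?_
    have hpos : (0:ℝ) < Real.sqrt (Real.log 2) := lt_of_lt_of_le (by norm_num) hslog
    have hkey : (4 + 2 * Real.sqrt 2) / Real.sqrt (Real.log 2) ≤ 8.3 := by
      rw [div_le_iff₀ hpos]; nlinarith
    calc (4 + 2 * Real.sqrt 2) * ((Real.sqrt L + Real.sqrt T) / Real.sqrt (Real.log 2))
        = (4 + 2 * Real.sqrt 2) / Real.sqrt (Real.log 2) * (Real.sqrt L + Real.sqrt T) := by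
          ring
      _ ≤ 8.3 * (Real.sqrt L + Real.sqrt T) :=
          mul_le_mul_of_nonneg_right hkey (by positivity)
  -- assemble the final inequality
  have hQle : D + 8.3 * Real.sqrt T ≤ 1.7 * Q := by
    have h := le_max_right (1:ℝ) ((D + 8.3 * Real.sqrt T) / 1.7)
    rw [div_le_iff₀ (by norm_num : (0:ℝ) < 1.7)] at h
    rw [hQdef]; linarith
  have hQL : Q ≤ Real.sqrt L := by
    have h := Real.sqrt_le_sqrt hLQ
    rwa [Real.sqrt_sq (by linarith)] at h
  have hDT : D + 8.3 * Real.sqrt T ≤ 1.7 * Real.sqrt L := le_trans hQle (by linarith)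
  have hkey2 : 1 + (4 + 2 * Real.sqrt 2) * (p₀ + 1 / (β * Real.log 2)) ≤
      10 * Real.sqrt L := by
    have hsplit2 : (4 + 2 * Real.sqrt 2) * (p₀ + 1 / (β * Real.log 2)) =
        (4 + 2 * Real.sqrt 2) * p₀ + (D - 1) := by
      rw [hDdef]; ring
    rw [hsplit2]
    calc 1 + ((4 + 2 * Real.sqrt 2) * p₀ + (D - 1)) = (4 + 2 * Real.sqrt 2) * p₀ + D := by
          ring
      _ ≤ 8.3 * (Real.sqrt L + Real.sqrt T) + (1.7 * Real.sqrt L - 8.3 * Real.sqrt T) :=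
          add_le_add hcoef (by linarith)
      _ = 10 * Real.sqrt L := by ring
  have h22 : Real.sqrt 2 * Real.sqrt 2 = 2 := Real.mul_self_sqrt (by norm_num)
  have hAeq : A = Real.sqrt 2 * Real.sqrt (C 0) := by
    rw [hAdef, Real.sqrt_mul (by norm_num)]
  have hC0s : (0:ℝ) ≤ Real.sqrt (C 0) := Real.sqrt_nonneg _
  have hcoef_nonneg : (0:ℝ) ≤ 2 + 2 ^ ((3:ℝ)/2) := by rw [h32]; positivity
  calc Real.sqrt (C 0) + (2 + 2 ^ ((3:ℝ)/2)) * ∫ p in Set.Ioi (1:ℝ), f p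
      ≤ Real.sqrt (C 0) + (2 + 2 ^ ((3:ℝ)/2)) * (A * (p₀ + 1 / (β * Real.log 2))) := by
        have := mul_le_mul_of_nonneg_left hIbound hcoef_nonneg
        linarith
    _ = Real.sqrt (C 0) * (1 + (4 + 2 * Real.sqrt 2) * (p₀ + 1 / (β * Real.log 2))) := by
        rw [h32, hAeq]
        linear_combination (2 * Real.sqrt (C 0) * (p₀ + 1 / (β * Real.log 2))) * h22
    _ ≤ Real.sqrt (C 0) * (10 * Real.sqrt L) := mul_le_mul_of_nonneg_left hkey2 hC0s
    _ = 10 * Real.sqrt (C 0 * L) := by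
        rw [Real.sqrt_mul hC0pos.le]; ring
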